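/- Suppose ξ, ψ, θ, x, y, u are differentiable with ξ' = u·ξ − x·θ, ψ' = −u·ψ + y·θ, θ' = 2(x·ψ − y·ξ), ξ never vanishes, and the discriminant identity 4ξψ + θ² = 0 holds identically. Then λ := θ/(2ξ) satisfies λ' = x·λ² − u·λ − y. -/

import Mathlib

theorem riccati_double_root
    (ξ ψ θ x y u : ℝ → ℂ)
    (hξ : ∀ t, HasDerivAt ξ (u t * ξ t - x t * θ t) t)
    (hψ : ∀ t, HasDerivAt ψ (-(u t) * ψ t + y t * θ t) t)
    (hθ : ∀ t, HasDerivAt θ (2 * (x t * ψ t - y t * ξ t)) t)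
    (hξne : ∀ t, ξ t ≠ 0)
    (hdisc : ∀ t, 4 * ξ t * ψ t + (θ t) ^ 2 = 0) :
    ∀ t, HasDerivAt (fun t => θ t / (2 * ξ t))
      (x t * (θ t / (2 * ξ t)) ^ 2 - u t * (θ t / (2 * ξ t)) - y t) t := by
  intro t
  have h2 : (2 : ℂ) * ξ t ≠ 0 := mul_ne_zero two_ne_zero (hξne t)
  have hd : HasDerivAt (fun t => (2 : ℂ) * ξ t) (2 * (u t * ξ t - x t * θ t)) t :=
    (hξ t).const_mul 2
  have h := (hθ t).div hd h2
  convert h using 1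
  case e'_4 => rfl
  case e'_8 => rfl
  have hψval : ψ t = -(θ t) ^ 2 / (4 * ξ t) := by
    have h4 : (4:ℂ) * ξ t ≠ 0 := mul_ne_zero (by norm_num) (hξne t)
    rw [eq_div_iff h4]
    linear_combination hdisc t
  rw [hψval]
  field_simp [hξne t]
  ring
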